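/- Let A be a C*-algebra, φ a lower semicontinuous weight on A, H a complex Hilbert space, and x : H × H → A a map that is linear in its first variable and conjugate-linear in its second, satisfying x(w,v) = x(v,w)*, x(v,v) ≥ 0 in A for every v ∈ H, and ‖x(v,w)‖ ≤ C‖v‖‖w‖ for all v, w ∈ H and some constant C ≥ 0. If φ(x(v,v)) < ∞ for every v ∈ H, then there exists a unique positive bounded operator T on H such that ⟨T v, v⟩ = φ(x(v,v)) for every v ∈ H. -/

import Mathlib

set_option linter.unusedSectionVars false

open scoped InnerProductSpace ComplexConjugate ENNReal NNReal

namespace WeightLemmaAux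

variable {H : Type*} [NormedAddCommGroup H] [InnerProductSpace ℂ H]

/-- Real part of the polarization form associated to a quadratic functional `q`. -/
noncomputable def R (q : H → ℝ) (v w : H) : ℝ := (q (v + w) - q (v - w)) / 4

variable (q : H → ℝ) (M : ℝ)

section basic
variable (hq0 : ∀ v : H, 0 ≤ q v)
  (hpar : ∀ v w : H, q (v + w) + q (v - w) = 2 * q v + 2 * q w)
  (hhom : ∀ (c : ℂ) (v : H), q (c • v) = ‖c‖ ^ 2 * q v)
  (hM0 : 0 ≤ M) (hM : ∀ v : H, q v ≤ M * ‖v‖ ^ 2)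

include hhom in
lemma qreal (r : ℝ) (v : H) : q (r • v) = r ^ 2 * q v := by
  have h := hhom (r : ℂ) v
  rw [Complex.coe_smul] at h
  rw [h, Complex.norm_real, Real.norm_eq_abs, sq_abs]

include hhom in
lemma qzero : q 0 = 0 := by
  have h := hhom 0 0
  simpa using h

include hhom in
lemma qneg (v : H) : q (-v) = q v := by
  have h := qreal q hhom (-1) v
  simpa using h

include hhom in
lemma R0 (w : H) : R q 0 w = 0 := by
  simp [R, zero_sub, qneg q hhom]

include hpar in
lemma Rkey (u v w : H) :
    R q u w + R q v w = (q (u + v + (w + w)) - q (u + v - (w + w))) / 8 := by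
  have h1 := hpar (u + w) (v + w)
  have h2 := hpar (u - w) (v - w)
  have e1 : u + w + (v + w) = u + v + (w + w) := by abel
  have e2 : u + w - (v + w) = u - v := by abel
  have e3 : u - w + (v - w) = u + v - (w + w) := by abel
  have e4 : u - w - (v - w) = u - v := by abel
  rw [e1, e2] at h1; rw [e3, e4] at h2
  simp only [R]; linarith

include hpar hhom in
lemma Radd (u v w : H) : R q (u + v) w = R q u w + R q v w := by
  have h1 := Rkey q hpar u v w
  have h2 := Rkey q hpar (u + v) 0 w
  rw [R0 q hhom] at h2
  simp only [add_zero] at h2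
  linarith

include hhom in
lemma Rsymm (v w : H) : R q v w = R q w v := by
  simp only [R]
  rw [show v + w = w + v from add_comm v w, show v - w = -(w - v) by abel, qneg q hhom]

include hq0 hpar in
lemma Rbound_half (v w : H) : |R q v w| ≤ (q v + q w) / 2 := by
  have h := hpar v w
  have h1 := hq0 (v + w)
  have h2 := hq0 (v - w)
  simp only [R]
  rw [abs_le]
  constructor <;> [linarith; linarith]

include hpar hhom in
lemma Rnat : ∀ (n : ℕ) (v w : H), R q ((n : ℝ) • v) w = n * R q v w := by
  intro n
  induction n with
  | zero => intro v w; simpa using R0 q hhom w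
  | succ n ih =>
    intro v w
    have e : ((n + 1 : ℕ) : ℝ) • v = (n : ℝ) • v + v := by
      push_cast
      rw [add_smul, one_smul]
    rw [e, Radd q hpar hhom, ih]
    push_cast; ring

include hpar hhom in
lemma Rneg (v w : H) : R q (-v) w = - R q v w := by
  have h := Radd q hpar hhom v (-v) w
  simp only [add_neg_cancel] at h
  rw [R0 q hhom] at h
  linarith

include hpar hhom in
lemma Rint : ∀ (n : ℤ) (v w : H), R q ((n : ℝ) • v) w = n * R q v w := by
  intro n v w
  obtain ⟨m, rfl | rfl⟩ := n.eq_nat_or_neg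
  · exact_mod_cast Rnat q hpar hhom m v w
  · push_cast
    rw [neg_smul, Rneg q hpar hhom, Rnat q hpar hhom]
    ring

include hpar hhom in
lemma Rrat (r : ℚ) (v w : H) : R q ((r : ℝ) • v) w = r * R q v w := by
  have hd : ((r.den : ℕ) : ℝ) ≠ 0 := Nat.cast_ne_zero.mpr r.den_ne_zero
  have hr : ((r : ℚ) : ℝ) = (r.num : ℝ) / ((r.den : ℕ) : ℝ) := by
    exact_mod_cast (Rat.num_div_den r).symm
  have hmul : ((r.den : ℕ) : ℝ) • ((r : ℝ) • v) = ((r.num : ℤ) : ℝ) • v := by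
    rw [smul_smul]
    congr 1
    rw [hr]
    field_simp
  have h1 := Rnat q hpar hhom r.den ((r : ℝ) • v) w
  rw [hmul, Rint q hpar hhom] at h1
  have h2 : R q ((r : ℝ) • v) w = (r.num : ℝ) / ((r.den : ℕ) : ℝ) * R q v w := by
    field_simp
    linear_combination -h1
  rw [h2, ← hr]

include hq0 hpar hhom hM0 hM in
lemma Rsmall (w : H) (ε : ℝ) (hε : 0 < ε) :
    ∃ δ > 0, ∀ u : H, ‖u‖ < δ → |R q u w| ≤ ε := by
  set n : ℕ := ⌈q w / ε⌉₊ + 1 with hn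
  have hn0 : 0 < (n : ℝ) := by positivity
  have hqw : q w ≤ (n : ℝ) * ε := by
    have h1 : q w / ε ≤ (⌈q w / ε⌉₊ : ℝ) := Nat.le_ceil _
    have h2 : (⌈q w / ε⌉₊ : ℝ) ≤ (n : ℝ) := by rw [hn]; push_cast; linarith
    have := (div_le_iff₀ hε).mp (le_trans h1 h2)
    linarith
  refine ⟨Real.sqrt (ε / ((n : ℝ) * M + 1)), Real.sqrt_pos.mpr (by positivity), fun u hu => ?_⟩
  have hu2 : ‖u‖ ^ 2 < ε / ((n : ℝ) * M + 1) := by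
    have h0 : 0 ≤ ‖u‖ := norm_nonneg u
    nlinarith [Real.sq_sqrt (le_of_lt (show (0:ℝ) < ε / ((n : ℝ) * M + 1) by positivity)),
      Real.sqrt_nonneg (ε / ((n : ℝ) * M + 1))]
  have key : R q u w = (n : ℝ) * R q u ((n : ℝ)⁻¹ • w) :=
    calc R q u w = R q w u := Rsymm q hhom u w
      _ = R q ((n : ℝ) • ((n : ℝ)⁻¹ • w)) u := by
          rw [smul_smul, mul_inv_cancel₀ (ne_of_gt hn0), one_smul]
      _ = (n : ℝ) * R q ((n : ℝ)⁻¹ • w) u := Rnat q hpar hhom n _ u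
      _ = (n : ℝ) * R q u ((n : ℝ)⁻¹ • w) := by rw [Rsymm q hhom]
  have hb := Rbound_half q hq0 hpar u ((n : ℝ)⁻¹ • w)
  have hq1 : q ((n : ℝ)⁻¹ • w) = (n : ℝ)⁻¹ ^ 2 * q w := qreal q hhom _ w
  have hqu : q u ≤ M * ‖u‖ ^ 2 := hM u
  have habs : |R q u w| = (n : ℝ) * |R q u ((n : ℝ)⁻¹ • w)| := by
    rw [key, abs_mul, abs_of_pos hn0]
  rw [habs]
  have step1 : (n : ℝ) * |R q u ((n : ℝ)⁻¹ • w)| ≤ (n : ℝ) * ((q u + (n : ℝ)⁻¹ ^ 2 * q w) / 2) := by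
    apply mul_le_mul_of_nonneg_left _ (le_of_lt hn0)
    rw [← hq1]; exact hb
  refine le_trans step1 ?_
  have hinv : (n : ℝ) * ((n : ℝ)⁻¹ ^ 2 * q w) = q w / (n : ℝ) := by
    field_simp
  have e1 : (n : ℝ) * ((q u + (n : ℝ)⁻¹ ^ 2 * q w) / 2) = ((n : ℝ) * q u) / 2 + q w / (n : ℝ) / 2 := by
    field_simp
  rw [e1]
  have b1 : (n : ℝ) * q u / 2 ≤ ε / 2 := by
    have hu3 : ‖u‖ ^ 2 * ((n : ℝ) * M + 1) < ε :=
      (lt_div_iff₀ (by positivity : (0:ℝ) < (n : ℝ) * M + 1)).mp hu2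
    have h3 : (n : ℝ) * q u ≤ (n : ℝ) * (M * ‖u‖ ^ 2) :=
      mul_le_mul_of_nonneg_left hqu (le_of_lt hn0)
    nlinarith [sq_nonneg ‖u‖, hq0 u, mul_nonneg hM0 (sq_nonneg ‖u‖)]
  have b2 : q w / (n : ℝ) / 2 ≤ ε / 2 := by
    have : q w / (n : ℝ) ≤ ε := by
      rw [div_le_iff₀ hn0]; linarith
    linarith
  linarith

include hq0 hpar hhom hM0 hM in
lemma Rcont (w : H) : Continuous fun v : H => R q v w := by
  rw [Metric.continuous_iff]
  intro v₀ ε hε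
  obtain ⟨δ, hδ, hsmall⟩ := Rsmall q M hq0 hpar hhom hM0 hM w (ε / 2) (half_pos hε)
  refine ⟨δ, hδ, fun v hv => ?_⟩
  have hdiff : R q v w - R q v₀ w = R q (v - v₀) w := by
    have h := Radd q hpar hhom (v - v₀) v₀ w
    rw [sub_add_cancel] at h
    linarith
  rw [Real.dist_eq, hdiff]
  exact lt_of_le_of_lt (hsmall _ (by rwa [dist_eq_norm] at hv)) (half_lt_self hε)

include hq0 hpar hhom hM0 hM in
lemma Rreal (r : ℝ) (v w : H) : R q (r • v) w = r * R q v w := by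
  have hf : Continuous fun t : ℝ => R q (t • v) w :=
    (Rcont q M hq0 hpar hhom hM0 hM w).comp (continuous_id.smul continuous_const)
  have hg : Continuous fun t : ℝ => t * R q v w := continuous_id.mul continuous_const
  have heq : (fun t : ℝ => R q (t • v) w) ∘ ((↑) : ℚ → ℝ)
      = (fun t : ℝ => t * R q v w) ∘ ((↑) : ℚ → ℝ) := by
    funext t
    exact Rrat q hpar hhom t v w
  exact congrFun (Rat.denseRange_cast.equalizer hf hg heq) r

include hq0 hpar hhom hM0 hM in
lemma Rbound (v w : H) : |R q v w| ≤ M * ‖v‖ * ‖w‖ := by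
  rcases eq_or_ne v 0 with rfl | hv
  · rw [R0 q hhom]
    simp
  rcases eq_or_ne w 0 with rfl | hw
  · rw [Rsymm q hhom, R0 q hhom]
    simp
  have hv' : 0 < ‖v‖ := norm_pos_iff.mpr hv
  have hw' : 0 < ‖w‖ := norm_pos_iff.mpr hw
  set t : ℝ := Real.sqrt (‖w‖ / ‖v‖) with ht
  have ht0 : 0 < t := Real.sqrt_pos.mpr (by positivity)
  have ht2 : t ^ 2 = ‖w‖ / ‖v‖ := Real.sq_sqrt (by positivity)
  have key : R q v w = R q (t • v) (t⁻¹ • w) := by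
    have : R q (t • v) (t⁻¹ • w) = t * (t⁻¹ * R q w v) := by
      rw [Rreal q M hq0 hpar hhom hM0 hM, Rsymm q hhom v, Rreal q M hq0 hpar hhom hM0 hM]
    rw [this, Rsymm q hhom v w]
    field_simp
  have hb := Rbound_half q hq0 hpar (t • v) (t⁻¹ • w)
  have h1 : q (t • v) ≤ M * (t ^ 2 * ‖v‖ ^ 2) := by
    have := hM (t • v)
    rwa [norm_smul, Real.norm_eq_abs, abs_of_pos ht0, mul_pow] at this
  have h2 : q (t⁻¹ • w) ≤ M * ((t ^ 2)⁻¹ * ‖w‖ ^ 2) := by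
    have := hM (t⁻¹ • w)
    rwa [norm_smul, Real.norm_eq_abs, abs_of_pos (inv_pos.mpr ht0), mul_pow, inv_pow] at this
  have e1 : M * (t ^ 2 * ‖v‖ ^ 2) = M * ‖v‖ * ‖w‖ := by
    rw [ht2]; field_simp
  have e2 : M * ((t ^ 2)⁻¹ * ‖w‖ ^ 2) = M * ‖v‖ * ‖w‖ := by
    rw [ht2]; field_simp
  rw [key]
  refine le_trans hb ?_
  rw [e1] at h1; rw [e2] at h2
  linarith

end basic

section bform

variable (hq0 : ∀ v : H, 0 ≤ q v)
  (hpar : ∀ v w : H, q (v + w) + q (v - w) = 2 * q v + 2 * q w)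
  (hhom : ∀ (c : ℂ) (v : H), q (c • v) = ‖c‖ ^ 2 * q v)
  (hM0 : 0 ≤ M) (hM : ∀ v : H, q v ≤ M * ‖v‖ ^ 2)

include hhom in
lemma RI (v w : H) : R q (Complex.I • v) w = - R q v (Complex.I • w) := by
  have e1 : q (Complex.I • v + w) = q (v - Complex.I • w) := by
    have h := hhom Complex.I (v - Complex.I • w)
    have e : Complex.I • (v - Complex.I • w) = Complex.I • v + w := by
      rw [smul_sub, smul_smul, Complex.I_mul_I, neg_one_smul, sub_neg_eq_add]
    rw [e] at h
    rw [h, Complex.norm_I]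
    ring
  have e2 : q (Complex.I • v - w) = q (v + Complex.I • w) := by
    have h := hhom Complex.I (v + Complex.I • w)
    have e : Complex.I • (v + Complex.I • w) = Complex.I • v - w := by
      rw [smul_add, smul_smul, Complex.I_mul_I, neg_one_smul, ← sub_eq_add_neg]
    rw [e] at h
    rw [h, Complex.norm_I]
    ring
  simp only [R]
  rw [e1, e2]
  ring

include hhom in
lemma RII (v w : H) : R q (Complex.I • v) (Complex.I • w) = R q v w := by
  simp only [R]
  rw [← smul_add, ← smul_sub, hhom, hhom, Complex.norm_I]
  ring

/-- The complex polarization form. -/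
noncomputable def B (q : H → ℝ) (v w : H) : ℂ :=
  (R q v w : ℂ) + Complex.I * (R q (Complex.I • v) w : ℂ)

include hhom in
lemma Bself (v : H) : B q v v = (q v : ℂ) := by
  have h1 : R q v v = q v := by
    simp only [R, sub_self]
    have : v + v = (2 : ℝ) • v := by rw [two_smul]
    rw [this, qreal q hhom, qzero q hhom]
    ring
  have h2 : R q (Complex.I • v) v = 0 := by
    simp only [R]
    have e1 : Complex.I • v + v = (Complex.I + 1) • v := by rw [add_smul, one_smul]
    have e2 : Complex.I • v - v = (Complex.I - 1) • v := by rw [sub_smul, one_smul]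
    rw [e1, e2, hhom, hhom]
    have n1 : ‖Complex.I + 1‖ ^ 2 = 2 := by
      rw [Complex.sq_norm, Complex.normSq_apply]
      simp
      norm_num
    have n2 : ‖Complex.I - 1‖ ^ 2 = 2 := by
      rw [Complex.sq_norm, Complex.normSq_apply]
      simp
      norm_num
    rw [n1, n2]
    ring
  rw [B, h1, h2]
  simp

include hpar hhom in
lemma Badd₂ (v w w' : H) : B q v (w + w') = B q v w + B q v w' := by
  have h1 : R q v (w + w') = R q v w + R q v w' := by
    rw [Rsymm q hhom, Radd q hpar hhom, Rsymm q hhom w v, Rsymm q hhom w' v]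
  have h2 : R q (Complex.I • v) (w + w') = R q (Complex.I • v) w + R q (Complex.I • v) w' := by
    rw [Rsymm q hhom, Radd q hpar hhom, Rsymm q hhom w, Rsymm q hhom w']
  rw [B, B, B, h1, h2]
  push_cast
  ring

include hpar hhom in
lemma Badd₁ (v v' w : H) : B q (v + v') w = B q v w + B q v' w := by
  have h2 : Complex.I • (v + v') = Complex.I • v + Complex.I • v' := smul_add _ _ _
  rw [B, B, B, Radd q hpar hhom, h2, Radd q hpar hhom]
  push_cast
  ring

include hq0 hpar hhom hM0 hM in
lemma BsmulI₂ (v w : H) : B q v (Complex.I • w) = Complex.I * B q v w := by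
  have h1 : R q v (Complex.I • w) = - R q (Complex.I • v) w := by
    rw [RI q hhom]; ring_nf
  have h2 : R q (Complex.I • v) (Complex.I • w) = R q v w := RII q hhom v w
  rw [B, B, h1, h2]
  push_cast
  linear_combination (-(R q (Complex.I • v) w : ℝ) : ℂ) * Complex.I_sq

include hq0 hpar hhom hM0 hM in
lemma BsmulC₂ (c : ℂ) (v w : H) : B q v (c • w) = c * B q v w := by
  have hrw : c • w = c.re • w + c.im • (Complex.I • w) := by
    rw [← Complex.coe_smul c.re, ← Complex.coe_smul c.im, smul_smul, ← add_smul]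
    congr 1
    exact (Complex.re_add_im c).symm
  have hreal : ∀ (r : ℝ) (u : H), B q v (r • u) = (r : ℂ) * B q v u := by
    intro r u
    have h1 : R q v (r • u) = r * R q v u := by
      rw [Rsymm q hhom, Rreal q M hq0 hpar hhom hM0 hM, Rsymm q hhom u v]
    have h2 : R q (Complex.I • v) (r • u) = r * R q (Complex.I • v) u := by
      rw [Rsymm q hhom, Rreal q M hq0 hpar hhom hM0 hM, Rsymm q hhom u]
    rw [B, B, h1, h2]
    push_cast
    ring
  rw [hrw, Badd₂ q hpar hhom, hreal, hreal, BsmulI₂ q M hq0 hpar hhom hM0 hM]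
  have hc : (c.re : ℂ) + (c.im : ℂ) * Complex.I = c := Complex.re_add_im c
  linear_combination (B q v w) * hc

include hhom in
lemma Bconjsymm (v w : H) : B q w v = conj (B q v w) := by
  have h1 : R q w v = R q v w := Rsymm q hhom w v
  have h2 : R q (Complex.I • w) v = - R q (Complex.I • v) w := by
    rw [RI q hhom w v, Rsymm q hhom w (Complex.I • v)]
  rw [B, B, h1, h2]
  rw [map_add, map_mul, Complex.conj_I, Complex.conj_ofReal, Complex.conj_ofReal]
  push_cast
  ring

include hq0 hpar hhom hM0 hM in
lemma Bbound (v w : H) : ‖B q v w‖ ≤ 2 * M * ‖v‖ * ‖w‖ := by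
  have h1 : ‖((R q v w : ℝ) : ℂ)‖ ≤ M * ‖v‖ * ‖w‖ := by
    rw [Complex.norm_real, Real.norm_eq_abs]
    exact Rbound q M hq0 hpar hhom hM0 hM v w
  have h2 : ‖Complex.I * ((R q (Complex.I • v) w : ℝ) : ℂ)‖ ≤ M * ‖v‖ * ‖w‖ := by
    rw [norm_mul, Complex.norm_I, one_mul, Complex.norm_real, Real.norm_eq_abs]
    have := Rbound q M hq0 hpar hhom hM0 hM (Complex.I • v) w
    rwa [norm_smul, Complex.norm_I, one_mul] at this
  refine le_trans (norm_add_le _ _) ?_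
  linarith

end bform

section construction

variable [CompleteSpace H]
variable (hq0 : ∀ v : H, 0 ≤ q v)
  (hpar : ∀ v w : H, q (v + w) + q (v - w) = 2 * q v + 2 * q w)
  (hhom : ∀ (c : ℂ) (v : H), q (c • v) = ‖c‖ ^ 2 * q v)
  (hM0 : 0 ≤ M) (hM : ∀ v : H, q v ≤ M * ‖v‖ ^ 2)

include hq0 hpar hhom hM0 hM in
theorem jvn : ∃ T : H →L[ℂ] H, T.IsPositive ∧ ∀ v : H, ⟪v, T v⟫_ℂ = (q v : ℂ) := by
  have hBadd2 := Badd₂ q hpar hhom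
  have hBsmul2 := BsmulC₂ q M hq0 hpar hhom hM0 hM
  have hBbd := Bbound q M hq0 hpar hhom hM0 hM
  have hBconj := Bconjsymm q hhom
  let g : H → (H →L[ℂ] ℂ) := fun w =>
    LinearMap.mkContinuous
      { toFun := fun v => B q w v
        map_add' := fun a b => hBadd2 w a b
        map_smul' := fun c a => by simpa using hBsmul2 c w a }
      (2 * M * ‖w‖)
      (fun v => by
        have h := hBbd w v
        calc ‖B q w v‖ ≤ 2 * M * ‖w‖ * ‖v‖ := h
          _ = 2 * M * ‖w‖ * ‖v‖ := rfl)
  let Tf : H → H := fun w => (InnerProductSpace.toDual ℂ H).symm (g w)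
  have hT : ∀ w v : H, ⟪Tf w, v⟫_ℂ = B q w v := fun w v =>
    InnerProductSpace.toDual_symm_apply
  have hT' : ∀ v w : H, ⟪v, Tf w⟫_ℂ = B q v w := by
    intro v w
    calc ⟪v, Tf w⟫_ℂ = conj ⟪Tf w, v⟫_ℂ := (inner_conj_symm v (Tf w)).symm
      _ = conj (B q w v) := by rw [hT w v]
      _ = B q v w := (hBconj w v).symm
  have haddT : ∀ w w', Tf (w + w') = Tf w + Tf w' := by
    intro w w'
    apply ext_inner_left ℂ
    intro v
    rw [hT', inner_add_right, hT', hT', hBadd2]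
  have hsmulT : ∀ (c : ℂ) (w : H), Tf (c • w) = c • Tf w := by
    intro c w
    apply ext_inner_left ℂ
    intro v
    rw [hT', inner_smul_right, hT', hBsmul2]
  have hbddT : ∀ w, ‖Tf w‖ ≤ 2 * M * ‖w‖ := by
    intro w
    have he : ‖Tf w‖ = ‖g w‖ := LinearIsometryEquiv.norm_map _ _
    rw [he]
    exact LinearMap.mkContinuous_norm_le _ (by positivity) _
  let T : H →L[ℂ] H :=
    LinearMap.mkContinuous
      { toFun := Tf, map_add' := haddT, map_smul' := fun c w => by simpa using hsmulT c w }
      (2 * M) (fun w => by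
        calc ‖Tf w‖ ≤ 2 * M * ‖w‖ := hbddT w
          _ = 2 * M * ‖w‖ := rfl)
  have hTapp : ∀ v : H, T v = Tf v := fun v => rfl
  refine ⟨T, ⟨?_, ?_⟩, fun v => ?_⟩
  · intro a b
    show ⟪Tf a, b⟫_ℂ = ⟪a, Tf b⟫_ℂ
    rw [hT, hT']
  · intro v
    show 0 ≤ RCLike.re ⟪Tf v, v⟫_ℂ
    rw [hT v v, Bself q hhom v]
    have hre : RCLike.re ((q v : ℝ) : ℂ) = q v := by simp
    rw [hre]
    exact hq0 v
  · show ⟪v, Tf v⟫_ℂ = (q v : ℂ)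
    rw [hT', Bself q hhom]

end construction

end WeightLemmaAux
/-- Lemma 1.1 (abstract form): if `φ` is a lower semicontinuous weight on a
C*-algebra `A` and `x : H × H → A` is a bounded positive sesquilinear `A`-valued
map with `φ (x v v) < ∞` for every `v`, then there is a unique positive bounded
operator `T` on `H` with `⟨T v, v⟩ = φ (x v v)` for all `v`. -/
theorem exists_unique_positive_operator_of_weight_finite
    {A : Type*} [CStarAlgebra A] [PartialOrder A] [StarOrderedRing A]
    {H : Type*} [NormedAddCommGroup H] [InnerProductSpace ℂ H] [CompleteSpace H]
    (φ : A → ℝ≥0∞)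
    (hφadd : ∀ a b : A, 0 ≤ a → 0 ≤ b → φ (a + b) = φ a + φ b)
    (hφsmul : ∀ (r : ℝ≥0) (a : A), 0 ≤ a → φ ((r : ℝ) • a) = (r : ℝ≥0∞) * φ a)
    (hφlsc : ∀ α : ℝ≥0, IsClosed {a : A | 0 ≤ a ∧ φ a ≤ (α : ℝ≥0∞)})
    (x : H → H → A)
    (hadd₁ : ∀ v v' w : H, x (v + v') w = x v w + x v' w)
    (hsmul₁ : ∀ (c : ℂ) (v w : H), x (c • v) w = c • x v w)
    (hadd₂ : ∀ v w w' : H, x v (w + w') = x v w + x v w')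
    (hsmul₂ : ∀ (c : ℂ) (v w : H), x v (c • w) = (conj c) • x v w)
    (hstar : ∀ v w : H, x w v = star (x v w))
    (hpos : ∀ v : H, 0 ≤ x v v)
    (C : ℝ) (hC : 0 ≤ C)
    (hbdd : ∀ v w : H, ‖x v w‖ ≤ C * ‖v‖ * ‖w‖)
    (hfin : ∀ v : H, φ (x v v) < ∞) :
    ∃! T : H →L[ℂ] H, T.IsPositive ∧
      ∀ v : H, ⟪v, T v⟫_ℂ = ((φ (x v v)).toReal : ℂ) := by
  classical
  set q : H → ℝ := fun v => (φ (x v v)).toReal with hqdef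
  have hq0 : ∀ v : H, 0 ≤ q v := fun v => ENNReal.toReal_nonneg
  -- basic algebraic identities for x
  have hneg₁ : ∀ v w : H, x (-v) w = - x v w := by
    intro v w
    have h := hsmul₁ (-1) v w
    simpa using h
  have hneg₂ : ∀ v w : H, x v (-w) = - x v w := by
    intro v w
    have h := hsmul₂ (-1) v w
    simpa using h
  have hsub₁ : ∀ v w u : H, x (v - w) u = x v u - x w u := by
    intro v w u
    rw [sub_eq_add_neg, hadd₁, hneg₁, ← sub_eq_add_neg]
  have hsub₂ : ∀ v w u : H, x v (w - u) = x v w - x v u := by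
    intro v w u
    rw [sub_eq_add_neg, hadd₂, hneg₂, ← sub_eq_add_neg]
  -- parallelogram law at the level of A
  have par_A : ∀ v w : H, x (v + w) (v + w) + x (v - w) (v - w)
      = (x v v + x v v) + (x w w + x w w) := by
    intro v w
    rw [hadd₁, hadd₂, hadd₂, hsub₁, hsub₂, hsub₂]
    abel
  have hφpar : ∀ v w : H, φ (x (v + w) (v + w)) + φ (x (v - w) (v - w))
      = (φ (x v v) + φ (x v v)) + (φ (x w w) + φ (x w w)) := by
    intro v w
    rw [← hφadd _ _ (hpos _) (hpos _), par_A,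
      hφadd _ _ (add_nonneg (hpos v) (hpos v)) (add_nonneg (hpos w) (hpos w)),
      hφadd _ _ (hpos v) (hpos v), hφadd _ _ (hpos w) (hpos w)]
  have hq_par : ∀ v w : H, q (v + w) + q (v - w) = 2 * q v + 2 * q w := by
    intro v w
    have h := congrArg ENNReal.toReal (hφpar v w)
    rw [ENNReal.toReal_add (hfin _).ne (hfin _).ne,
      ENNReal.toReal_add (ENNReal.add_ne_top.mpr ⟨(hfin v).ne, (hfin v).ne⟩)
        (ENNReal.add_ne_top.mpr ⟨(hfin w).ne, (hfin w).ne⟩),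
      ENNReal.toReal_add (hfin v).ne (hfin v).ne,
      ENNReal.toReal_add (hfin w).ne (hfin w).ne] at h
    simp only [hqdef]
    linarith [h]
  -- homogeneity
  have hq_hom : ∀ (c : ℂ) (v : H), q (c • v) = ‖c‖ ^ 2 * q v := by
    intro c v
    have hx : x (c • v) (c • v) = ((‖c‖₊ ^ 2 : ℝ≥0) : ℝ) • x v v := by
      rw [hsmul₁, hsmul₂, smul_smul, Complex.mul_conj, Complex.coe_smul]
      congr 1
      rw [Complex.normSq_eq_norm_sq]
      push_cast
      ring
    have hφx := hφsmul (‖c‖₊ ^ 2) (x v v) (hpos v)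
    rw [← hx] at hφx
    have hco : (((‖c‖₊ ^ 2 : ℝ≥0) : ℝ≥0∞)).toReal = ‖c‖ ^ 2 := by
      rw [ENNReal.coe_toReal]
      push_cast
      ring
    simp only [hqdef]
    rw [hφx, ENNReal.toReal_mul, hco]
  have hq_real : ∀ (t : ℝ) (v : H), q (t • v) = t ^ 2 * q v := by
    intro t v
    have h := hq_hom (t : ℂ) v
    rw [Complex.coe_smul] at h
    rw [h, Complex.norm_real, Real.norm_eq_abs, sq_abs]
  -- continuity of v ↦ x v v
  have hdiffx : ∀ v u : H, x v v - x u u = x (v - u) v + x u (v - u) := by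
    intro v u
    rw [hsub₁, hsub₂]
    abel
  have contF : Continuous fun v : H => x v v := by
    rw [Metric.continuous_iff]
    intro u ε hε
    set D : ℝ := C * (2 * ‖u‖ + 1) with hD
    have hD0 : 0 ≤ D := by positivity
    refine ⟨min 1 (ε / (D + 1)), lt_min one_pos (by positivity), fun v hv => ?_⟩
    rw [dist_eq_norm] at hv ⊢
    have hv1 : ‖v - u‖ < 1 := lt_of_lt_of_le hv (min_le_left _ _)
    have hv2 : ‖v - u‖ < ε / (D + 1) := lt_of_lt_of_le hv (min_le_right _ _)
    have hnv : ‖v‖ ≤ ‖u‖ + 1 := by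
      have h := norm_sub_norm_le v u
      linarith
    have hle : ‖x v v - x u u‖ ≤ D * ‖v - u‖ := by
      rw [hdiffx]
      refine le_trans (norm_add_le _ _) ?_
      have b1 := hbdd (v - u) v
      have b2 := hbdd u (v - u)
      have hkey : C * ‖v - u‖ * ‖v‖ + C * ‖u‖ * ‖v - u‖ ≤ D * ‖v - u‖ := by
        rw [hD]
        nlinarith [norm_nonneg (v - u), norm_nonneg u, norm_nonneg v,
          mul_nonneg (mul_nonneg hC (norm_nonneg (v - u))) (sub_nonneg.mpr hnv),
          mul_nonneg hC (norm_nonneg (v - u))]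
      linarith
    have hv2' : ‖v - u‖ * (D + 1) < ε := (lt_div_iff₀ (by positivity)).mp hv2
    nlinarith [norm_nonneg (v - u)]
  -- Baire category: q is bounded on a ball
  have hne : Nonempty H := ⟨0⟩
  obtain ⟨n, v₀, r, hr, hball⟩ :
      ∃ (n : ℕ) (v₀ : H) (r : ℝ), 0 < r ∧
        Metric.ball v₀ r ⊆ (fun v : H => x v v) ⁻¹'
          {a : A | 0 ≤ a ∧ φ a ≤ ((n : ℝ≥0) : ℝ≥0∞)} := by
    have hclosed : ∀ m : ℕ, IsClosed ((fun v : H => x v v) ⁻¹'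
        {a : A | 0 ≤ a ∧ φ a ≤ ((m : ℝ≥0) : ℝ≥0∞)}) := fun m => (hφlsc m).preimage contF
    have hcover : ⋃ m : ℕ, ((fun v : H => x v v) ⁻¹'
        {a : A | 0 ≤ a ∧ φ a ≤ ((m : ℝ≥0) : ℝ≥0∞)}) = Set.univ := by
      ext v
      simp only [Set.mem_iUnion, Set.mem_univ, iff_true, Set.mem_preimage, Set.mem_setOf_eq]
      obtain ⟨m, hm⟩ := ENNReal.exists_nat_gt (hfin v).ne
      exact ⟨m, hpos v, by exact_mod_cast hm.le⟩
    obtain ⟨m, hm⟩ := nonempty_interior_of_iUnion_of_closed hclosed hcover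
    obtain ⟨v₀, hv₀⟩ := hm
    rw [mem_interior_iff_mem_nhds, Metric.mem_nhds_iff] at hv₀
    obtain ⟨r, hr, hball⟩ := hv₀
    exact ⟨m, v₀, r, hr, hball⟩
  have hle_n : ∀ w : H, w ∈ Metric.ball v₀ r → q w ≤ n := by
    intro w hw
    have h := (hball hw).2
    have h2 := ENNReal.toReal_mono ENNReal.coe_ne_top h
    simpa using h2
  have hq4n : ∀ u : H, ‖u‖ < r → q u ≤ 4 * n := by
    intro u hu
    have h0 : v₀ ∈ Metric.ball v₀ r := Metric.mem_ball_self hr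
    have h1 : v₀ + u ∈ Metric.ball v₀ r := by
      rw [Metric.mem_ball, dist_eq_norm, add_sub_cancel_left]
      exact hu
    have hp := hq_par (v₀ + u) v₀
    rw [add_sub_cancel_left] at hp
    linarith [hle_n _ h0, hle_n _ h1, hq0 (v₀ + u + v₀)]
  set M : ℝ := 16 * n / r ^ 2 with hMdef
  have hM0 : 0 ≤ M := by positivity
  have hMle : ∀ v : H, q v ≤ M * ‖v‖ ^ 2 := by
    intro v
    rcases eq_or_ne v 0 with rfl | hv
    · have h0 : q (0 : H) = 0 := by
        have h := hq_hom 0 0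
        simpa using h
      rw [h0]
      positivity
    · have hv' : 0 < ‖v‖ := norm_pos_iff.mpr hv
      set u : H := (r / (2 * ‖v‖)) • v with hu
      have hnu : ‖u‖ = r / 2 := by
        rw [hu, norm_smul, Real.norm_eq_abs, abs_of_pos (by positivity)]
        field_simp
      have hur : ‖u‖ < r := by rw [hnu]; linarith
      have hvu : v = (2 * ‖v‖ / r) • u := by
        rw [hu, smul_smul, show 2 * ‖v‖ / r * (r / (2 * ‖v‖)) = 1 by field_simp, one_smul]
      have hqu := hq4n u hur
      have hqv : q v = (2 * ‖v‖ / r) ^ 2 * q u := by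
        conv_lhs => rw [hvu]
        exact hq_real _ _
      rw [hqv, hMdef]
      have hr2 : 0 < r ^ 2 := by positivity
      have h4 : (2 * ‖v‖ / r) ^ 2 = 4 * ‖v‖ ^ 2 / r ^ 2 := by ring
      rw [h4, div_mul_eq_mul_div, div_mul_eq_mul_div, div_le_div_iff₀ hr2 hr2]
      nlinarith [sq_nonneg ‖v‖, hq0 u, mul_nonneg (mul_nonneg (sq_nonneg ‖v‖) hr2.le)
        (sub_nonneg.mpr hqu)]
  -- apply the abstract construction
  obtain ⟨T, hTpos, hTval⟩ := WeightLemmaAux.jvn q M hq0 hq_par hq_hom hM0 hMle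
  refine ⟨T, ⟨hTpos, fun v => hTval v⟩, ?_⟩
  rintro S ⟨hSpos, hSval⟩
  have hdiffzero : ∀ v : H, ⟪(S - T) v, v⟫_ℂ = 0 := by
    intro v
    have h1 : ⟪v, S v⟫_ℂ = ⟪v, T v⟫_ℂ := (hSval v).trans (hTval v).symm
    have h2 : ⟪S v, v⟫_ℂ = ⟪T v, v⟫_ℂ := by
      calc ⟪S v, v⟫_ℂ = conj ⟪v, S v⟫_ℂ := (inner_conj_symm (S v) v).symm
        _ = conj ⟪v, T v⟫_ℂ := by rw [h1]
        _ = ⟪T v, v⟫_ℂ := inner_conj_symm (T v) v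
    rw [ContinuousLinearMap.sub_apply, inner_sub_left, h2, sub_self]
  have hz : ((S - T : H →L[ℂ] H) : H →ₗ[ℂ] H) = 0 :=
    (inner_map_self_eq_zero _).mp (fun v => hdiffzero v)
  have hST : S - T = 0 := by
    ext v
    have h := congrFun (congrArg (fun f : H →ₗ[ℂ] H => (f : H → H)) hz) v
    simpa using h
  exact sub_eq_zero.mp hST
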